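/- Let x ∈ E(A) with σ = σ(x;A) and r = σ^{−1/m} p^{−1/(p−1)} (r = ∞ if σ = 0). Then for each k ∈ {0,…,m−1}, the 𝔅-valued function u(z) = F_k(z;A)x satisfies the differential equation u^{(m)}(z) = A u(z) on the disk |z|_p < r, with initial data u^{(i)}(0) = δ_{ik}·x for i = 0,…,m−1 (δ_{ik} the Kronecker delta). Moreover F_0^{(ml)}(z;A)x = F_0(z;A)(A^l x) for all l ∈ ℕ. -/

import Mathlib

open Filter Topology
open scoped ENNReal NNReal

namespace MLaux

variable {K : Type*} [NontriviallyNormedField K]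
  {B : Type*} [NormedAddCommGroup B] [NormedSpace K B]

/-- master sequence -/
noncomputable def sq (A : B →ₗ[K] B) (m k : ℕ) (v : B) (j : ℕ) : B :=
  if j % m = k then (⇑A)^[j / m] v else 0

/-- generic series function -/
noncomputable def Gf (c : ℕ → B) (z : K) : B :=
  ∑' j : ℕ, ((j.factorial : K))⁻¹ • z ^ j • c j

variable (K) in
/-- associated formal power series -/
noncomputable def Ps (c : ℕ → B) : FormalMultilinearSeries K K B :=
  fun j => ContinuousMultilinearMap.mkPiRing K (Fin j) ((j.factorial : K)⁻¹ • c j)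

lemma Ps_apply (c : ℕ → B) (j : ℕ) (z : K) :
    Ps K c j (fun _ => z) = (j.factorial : K)⁻¹ • z ^ j • c j := by
  simp [Ps, ContinuousMultilinearMap.mkPiRing_apply, smul_comm ((j.factorial : K)⁻¹)]

lemma norm_Ps (c : ℕ → B) (j : ℕ) : ‖Ps K c j‖ = ‖(j.factorial : K)⁻¹ • c j‖ := by
  simp only [Ps]
  exact ContinuousMultilinearMap.norm_mkPiRing _

lemma Gf_eq_sum (c : ℕ → B) : Gf c = (Ps K c).sum := by
  funext z
  rw [Gf, FormalMultilinearSeries.sum]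
  exact tsum_congr fun j => (Ps_apply c j z).symm

lemma Gf_zero (c : ℕ → B) : Gf c (0 : K) = c 0 := by
  rw [Gf, tsum_eq_single 0]
  · simp
  · intro j hj
    rw [zero_pow hj, zero_smul, smul_zero]

lemma sq_shift_succ (A : B →ₗ[K] B) {m k : ℕ} (hk : k + 1 < m) (v : B) (j : ℕ) :
    sq A m (k + 1) v (j + 1) = sq A m k v j := by
  have hm0 : 0 < m := by omega
  by_cases h : j % m = k
  · have e := Nat.div_add_mod j m
    rw [h] at e
    have e1 : j + 1 = m * (j / m) + (k + 1) := by omega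
    rw [sq, sq, h, if_pos rfl, e1, Nat.mul_add_mod, Nat.mod_eq_of_lt hk, if_pos rfl,
      Nat.mul_add_div hm0, Nat.div_eq_of_lt hk, Nat.add_zero]
  · have h2 : ¬ (j + 1) % m = k + 1 := by
      intro hc
      have e := Nat.div_add_mod (j + 1) m
      rw [hc] at e
      have e1 : j = m * ((j + 1) / m) + k := by omega
      rw [e1, Nat.mul_add_mod, Nat.mod_eq_of_lt (by omega : k < m)] at h
      exact h rfl
    rw [sq, sq, if_neg h, if_neg h2]

lemma sq_shift_zero (A : B →ₗ[K] B) {m : ℕ} (hm : 0 < m) (v : B) (j : ℕ) :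
    sq A m 0 v (j + 1) = sq A m (m - 1) (A v) j := by
  by_cases h : j % m = m - 1
  · have e := Nat.div_add_mod j m
    rw [h] at e
    have e1 : j + 1 = m * (j / m + 1) := by
      rw [show m * (j / m + 1) = m * (j / m) + m from by ring]
      generalize m * (j / m) = t at e ⊢
      omega
    rw [sq, sq, h, if_pos rfl, e1, Nat.mul_mod_right, if_pos rfl,
      Nat.mul_div_cancel_left _ hm, Function.iterate_succ_apply]
  · have h2 : ¬ (j + 1) % m = 0 := by
      intro hc
      have e := Nat.div_add_mod (j + 1) m
      rw [hc] at e
      have hmle : m ≤ j + 1 := by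
        by_contra hlt
        push_neg at hlt
        rw [Nat.mod_eq_of_lt hlt] at hc
        omega
      have hq : 0 < (j + 1) / m := Nat.div_pos hmle hm
      obtain ⟨q, hq'⟩ : ∃ q, (j + 1) / m = q + 1 := ⟨(j + 1) / m - 1, by omega⟩
      rw [hq', show m * (q + 1) = m * q + m from by ring] at e
      have e1 : j = m * q + (m - 1) := by
        generalize m * q = t at e ⊢
        omega
      rw [e1, Nat.mul_add_mod, Nat.mod_eq_of_lt (by omega : m - 1 < m)] at h
      exact h rfl
    rw [sq, sq, if_neg h, if_neg h2]

lemma eqOn_deriv_iter {f g : K → B} {s : Set K} (hs : IsOpen s) (h : Set.EqOn f g s) :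
    ∀ n : ℕ, Set.EqOn (deriv^[n] f) (deriv^[n] g) s := by
  intro n
  induction n with
  | zero => exact h
  | succ n ih =>
    intro z hz
    rw [Function.iterate_succ_apply', Function.iterate_succ_apply']
    exact Filter.EventuallyEq.deriv_eq (Filter.eventuallyEq_of_mem (hs.mem_nhds hz) ih)

lemma norm_factorial_inv_le {p : ℕ} [Fact p.Prime] {K : Type*} [NontriviallyNormedField K]
    [Algebra ℚ_[p] K] (hK : ∀ q : ℚ_[p], ‖algebraMap ℚ_[p] K q‖ = ‖q‖) (j : ℕ) :
    ‖((j.factorial : K))⁻¹‖ ≤ ((p : ℝ) ^ ((1 : ℝ)/((p : ℝ) - 1))) ^ j := by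
  have hp := (Fact.out : p.Prime)
  have hp1 : (1 : ℝ) < p := by exact_mod_cast hp.one_lt
  have hne : ((j.factorial : ℚ_[p])) ≠ 0 := Nat.cast_ne_zero.mpr j.factorial_ne_zero
  have h1 : ‖(j.factorial : K)‖ = ‖(j.factorial : ℚ_[p])‖ := by
    rw [← map_natCast (algebraMap ℚ_[p] K) j.factorial, hK]
  have h2 : ‖(j.factorial : ℚ_[p])‖ = (p : ℝ) ^ (-((padicValNat p j.factorial : ℤ))) := by
    rw [Padic.norm_eq_zpow_neg_valuation hne, Padic.valuation_natCast]
  rw [norm_inv, h1, h2, ← zpow_neg, neg_neg, zpow_natCast]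
  set v := padicValNat p j.factorial with hvdef
  have hv : (p - 1) * v ≤ j := by
    have h3 := _root_.sub_one_mul_padicValNat_factorial (p := p) j
    rw [← hvdef] at h3
    omega
  have hvr : (v : ℝ) ≤ (1/((p : ℝ) - 1)) * j := by
    rw [one_div, inv_mul_eq_div, le_div_iff₀ (by linarith : (0 : ℝ) < (p : ℝ) - 1)]
    have : ((p - 1) * v : ℕ) ≤ (j : ℕ) := hv
    calc (v : ℝ) * ((p : ℝ) - 1) = (((p - 1) * v : ℕ) : ℝ) := by
          rw [Nat.cast_mul, Nat.cast_sub hp.one_le]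
          push_cast
          ring
      _ ≤ (j : ℝ) := by exact_mod_cast this
  calc (p : ℝ) ^ v = (p : ℝ) ^ ((v : ℕ) : ℝ) := (Real.rpow_natCast _ _).symm
    _ ≤ (p : ℝ) ^ ((1/((p : ℝ) - 1)) * j) := Real.rpow_le_rpow_of_exponent_le (le_of_lt hp1) hvr
    _ = ((p : ℝ) ^ ((1 : ℝ)/((p : ℝ) - 1))) ^ j := by
        rw [Real.rpow_mul (by positivity), Real.rpow_natCast]

end MLaux

open MLaux

set_option maxHeartbeats 2000000 in
theorem mittag_leffler_solves_equation
    {p : ℕ} [Fact p.Prime]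
    {K : Type*} [NontriviallyNormedField K] [CompleteSpace K] [IsAlgClosed K]
    [IsUltrametricDist K] [Algebra ℚ_[p] K]
    (hK : ∀ q : ℚ_[p], ‖algebraMap ℚ_[p] K q‖ = ‖q‖)
    {B : Type*} [NormedAddCommGroup B] [NormedSpace K B] [CompleteSpace B]
    [IsUltrametricDist B]
    (D : Submodule K B) (A : B →ₗ[K] B)
    (hA : IsClosed {q : B × B | q.1 ∈ D ∧ A q.1 = q.2})
    (m : ℕ) (hm : 1 ≤ m)
    (x : B)
    (hxdom : ∀ n : ℕ, (⇑A)^[n] x ∈ D)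
    (hxE : ∃ α > (0 : ℝ), ∃ C > (0 : ℝ), ∀ n : ℕ, ‖(⇑A)^[n] x‖ ≤ C * α ^ n)
    (σ : ℝ)
    (hσ : σ = Filter.limsup (fun n : ℕ => ‖(⇑A)^[n] x‖ ^ (1 / (n : ℝ))) atTop)
    (F : ℕ → B → K → B)
    (hF : ∀ (k : ℕ) (v : B) (z : K),
      F k v z = ∑' n : ℕ, ((m * n + k).factorial : K)⁻¹ • z ^ (m * n + k) • (⇑A)^[n] v) :
    (∀ k < m,
      (∀ z : K,
        (σ = 0 ∨ ‖z‖ < σ ^ (-(1 : ℝ) / (m : ℝ)) * (p : ℝ) ^ (-(1 : ℝ) / ((p : ℝ) - 1))) →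
        iteratedDeriv m (F k x) z = A (F k x z)) ∧
      (∀ i < m, iteratedDeriv i (F k x) 0 = if i = k then x else 0)) ∧
    (∀ l : ℕ, ∀ z : K,
      (σ = 0 ∨ ‖z‖ < σ ^ (-(1 : ℝ) / (m : ℝ)) * (p : ℝ) ^ (-(1 : ℝ) / ((p : ℝ) - 1))) →
      iteratedDeriv (m * l) (F 0 x) z = F 0 ((⇑A)^[l] x) z) := by
  classical
  haveI : CharZero K := charZero_of_injective_algebraMap (algebraMap ℚ_[p] K).injective
  obtain ⟨α, hα, C, hC, hCb⟩ := hxE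
  have hp := (Fact.out : p.Prime)
  have hp1 : (1 : ℝ) < p := by exact_mod_cast hp.one_lt
  have hm0 : 0 < m := hm
  set pc : ℝ := (p : ℝ) ^ ((1 : ℝ)/((p : ℝ) - 1)) with hpc
  have hpc0 : 0 < pc := Real.rpow_pos_of_pos (by linarith) _
  set ρ : ℝ := σ ^ (-(1 : ℝ)/(m : ℝ)) * (p : ℝ) ^ (-(1 : ℝ)/((p : ℝ) - 1)) with hρdef
  set R : ℝ≥0∞ := if σ = 0 then ⊤ else ENNReal.ofReal ρ with hR
  set u : ℕ → ℝ := fun n => ‖(⇑A)^[n] x‖ ^ (1/(n : ℝ)) with hu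
  have hubdd : IsBoundedUnder (· ≤ ·) atTop u := by
    refine isBoundedUnder_of ⟨max 1 (max C 1 * α), fun n => ?_⟩
    rcases Nat.eq_zero_or_pos n with rfl | hn
    · simp only [hu, Nat.cast_zero, div_zero, Real.rpow_zero]
      exact le_max_left _ _
    · have hn' : (0 : ℝ) < n := by exact_mod_cast hn
      have h1 : u n ≤ (C * α ^ n) ^ (1/(n : ℝ)) :=
        Real.rpow_le_rpow (norm_nonneg _) (hCb n) (by positivity)
      have h2 : (C * α ^ n : ℝ) ^ (1/(n : ℝ)) = C ^ (1/(n : ℝ)) * α := by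
        rw [Real.mul_rpow (le_of_lt hC) (by positivity), ← Real.rpow_natCast α n,
          ← Real.rpow_mul (le_of_lt hα), mul_one_div, div_self (ne_of_gt hn'), Real.rpow_one]
      have h3 : C ^ (1/(n : ℝ)) ≤ max C 1 := by
        rcases le_total C 1 with hC1 | hC1
        · have : C ^ (1/(n : ℝ)) ≤ 1 ^ (1/(n : ℝ)) :=
            Real.rpow_le_rpow (le_of_lt hC) hC1 (by positivity)
          rw [Real.one_rpow] at this
          exact this.trans (le_max_right _ _)
        · have hle : (1 : ℝ)/n ≤ 1 := by
            rw [div_le_one hn']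
            exact_mod_cast hn
          have h4 : C ^ (1/(n : ℝ)) ≤ C ^ (1 : ℝ) :=
            Real.rpow_le_rpow_of_exponent_le hC1 hle
          rw [Real.rpow_one] at h4
          exact h4.trans (le_max_left _ _)
      calc u n ≤ (C * α ^ n) ^ (1/(n : ℝ)) := h1
        _ = C ^ (1/(n : ℝ)) * α := h2
        _ ≤ max C 1 * α := mul_le_mul_of_nonneg_right h3 (le_of_lt hα)
        _ ≤ max 1 (max C 1 * α) := le_max_right _ _
  have hσ0 : 0 ≤ σ := by
    rw [hσ]
    exact le_limsup_of_frequently_le (Filter.Frequently.of_forall fun n =>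
      Real.rpow_nonneg (norm_nonneg _) _) hubdd
  have hρpos : σ ≠ 0 → 0 < ρ := fun hσne => mul_pos
    (Real.rpow_pos_of_pos (lt_of_le_of_ne hσ0 (Ne.symm hσne)) _)
    (Real.rpow_pos_of_pos (by linarith) _)
  have hRpos : 0 < R := by
    rw [hR]
    split_ifs with h
    · simp
    · exact ENNReal.ofReal_pos.mpr (hρpos h)
  have hball : ∀ z : K, (σ = 0 ∨ ‖z‖ < ρ) → z ∈ Metric.eball (0 : K) R := by
    intro z hP
    rw [mem_emetric_ball_zero_iff]
    by_cases h : σ = 0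
    · rw [hR, if_pos h]
      exact ENNReal.coe_lt_top
    · rw [hR, if_neg h]
      have hzρ : ‖z‖ < ρ := hP.resolve_left h
      rw [← ofReal_norm]
      exact (ENNReal.ofReal_lt_ofReal_iff (hρpos h)).mpr hzρ
  have hrad : ∀ k, k < m → ∀ l : ℕ, R ≤ (MLaux.Ps K (MLaux.sq A m k ((⇑A)^[l] x))).radius := by
    intro k hk l
    refine ENNReal.le_of_forall_nnreal_lt fun t ht => ?_
    rcases eq_or_ne t 0 with rfl | ht0
    · exact le_trans (by simp) zero_le
    have htpos : (0 : ℝ) < t := by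
      exact_mod_cast pos_iff_ne_zero.mpr ht0
    set s : ℝ := (t : ℝ) * pc with hs
    have hspos : 0 < s := mul_pos htpos hpc0
    have hσinv : σ < (s ^ m)⁻¹ := by
      by_cases hσe : σ = 0
      · rw [hσe]
        positivity
      · have htR : (t : ℝ≥0∞) < ENNReal.ofReal ρ := by rwa [hR, if_neg hσe] at ht
        have htρ : (t : ℝ) < ρ :=
          (ENNReal.ofReal_lt_ofReal_iff (hρpos hσe)).mp
            (by rwa [← ENNReal.ofReal_coe_nnreal] at htR)
        have hσpos : 0 < σ := lt_of_le_of_ne hσ0 (Ne.symm hσe)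
        have h2 : ρ * pc = σ ^ (-(1 : ℝ)/(m : ℝ)) := by
          rw [hρdef, hpc, mul_assoc, ← Real.rpow_add (by linarith : (0 : ℝ) < (p : ℝ)),
            show -1 / ((p : ℝ) - 1) + 1 / ((p : ℝ) - 1) = 0 by ring, Real.rpow_zero, mul_one]
        have h1 : s < σ ^ (-(1 : ℝ)/(m : ℝ)) := by
          rw [hs, ← h2]
          exact mul_lt_mul_of_pos_right htρ hpc0
        have h4 : (σ ^ (-(1 : ℝ)/(m : ℝ))) ^ m = σ⁻¹ := by
          rw [← Real.rpow_natCast (σ ^ (-(1 : ℝ)/(m : ℝ))) m, ← Real.rpow_mul hσ0,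
            show (-(1 : ℝ)/(m : ℝ)) * (m : ℕ) = -1 by
              field_simp,
            Real.rpow_neg_one]
        have h3 : s ^ m < σ⁻¹ := by
          rw [← h4]
          exact pow_lt_pow_left₀ h1 (le_of_lt hspos) (by omega)
        have h5 : σ * s ^ m < 1 := by
          calc σ * s ^ m < σ * σ⁻¹ := by
                exact mul_lt_mul_of_pos_left h3 hσpos
            _ = 1 := mul_inv_cancel₀ (ne_of_gt hσpos)
        rw [← one_div, lt_div_iff₀ (pow_pos hspos m)]
        exact h5
    obtain ⟨τ, hτ1, hτ2⟩ := exists_between hσinv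
    have hτpos : 0 < τ := lt_of_le_of_lt hσ0 hτ1
    have hr0 : 0 < s ^ m * τ := by positivity
    have hr1 : s ^ m * τ < 1 := by
      calc s ^ m * τ < s ^ m * (s ^ m)⁻¹ := mul_lt_mul_of_pos_left hτ2 (pow_pos hspos m)
        _ = 1 := mul_inv_cancel₀ (ne_of_gt (pow_pos hspos m))
    have hev : ∀ᶠ n in atTop, ‖(⇑A)^[n] x‖ ≤ τ ^ n := by
      have h1 : ∀ᶠ n in atTop, u n < τ := by
        refine eventually_lt_of_limsup_lt ?_ hubdd
        rw [← hσ]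
        exact hτ1
      filter_upwards [h1, eventually_ge_atTop 1] with n hn hn1
      have hn' : (0 : ℝ) < n := by exact_mod_cast hn1
      have h2 : ‖(⇑A)^[n] x‖ = (u n) ^ (n : ℝ) := by
        rw [hu]
        dsimp only
        rw [← Real.rpow_mul (norm_nonneg _),
          show (1/(n : ℝ)) * (n : ℝ) = 1 by field_simp, Real.rpow_one]
      rw [h2, ← Real.rpow_natCast τ n]
      exact Real.rpow_le_rpow (Real.rpow_nonneg (norm_nonneg _) _) (le_of_lt hn)
        (le_of_lt hn')
    obtain ⟨N, hN⟩ := eventually_atTop.mp hev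
    set q : ℝ := (s ^ m * τ) ^ ((1 : ℝ)/(m : ℝ)) with hq
    have hq0 : 0 ≤ q := Real.rpow_nonneg (le_of_lt hr0) _
    have hq1 : q < 1 := Real.rpow_lt_one (le_of_lt hr0) hr1 (by positivity)
    set M : ℝ := s ^ k * τ ^ l * (s ^ m * τ)⁻¹ with hM
    have hM0 : 0 ≤ M := by positivity
    refine FormalMultilinearSeries.le_radius_of_tendsto _ (l := 0) ?_
    refine squeeze_zero' (Eventually.of_forall fun j => by positivity)
      (g := fun j => M * q ^ j) ?_ ?_
    · filter_upwards [eventually_ge_atTop (m * N)] with j hj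
      have hb1 : ‖MLaux.Ps K (MLaux.sq A m k ((⇑A)^[l] x)) j‖ * (t : ℝ) ^ j
          ≤ s ^ j * ‖MLaux.sq A m k ((⇑A)^[l] x) j‖ := by
        rw [MLaux.norm_Ps, norm_smul]
        have hb2 : ‖((j.factorial : K))⁻¹‖ * ‖MLaux.sq A m k ((⇑A)^[l] x) j‖
            ≤ pc ^ j * ‖MLaux.sq A m k ((⇑A)^[l] x) j‖ :=
          mul_le_mul_of_nonneg_right (MLaux.norm_factorial_inv_le hK j) (norm_nonneg _)
        calc ‖((j.factorial : K))⁻¹‖ * ‖MLaux.sq A m k ((⇑A)^[l] x) j‖ * (t : ℝ) ^ j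
            ≤ pc ^ j * ‖MLaux.sq A m k ((⇑A)^[l] x) j‖ * (t : ℝ) ^ j :=
              mul_le_mul_of_nonneg_right hb2 (by positivity)
          _ = s ^ j * ‖MLaux.sq A m k ((⇑A)^[l] x) j‖ := by
              rw [hs, mul_pow]
              ring
      refine hb1.trans ?_
      by_cases hmod : j % m = k
      · have e := Nat.div_add_mod j m
        rw [hmod] at e
        have hcj : MLaux.sq A m k ((⇑A)^[l] x) j = (⇑A)^[j / m + l] x := by
          rw [MLaux.sq, if_pos hmod, ← Function.iterate_add_apply]
        have hdiv : N ≤ j / m := by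
          rw [Nat.le_div_iff_mul_le hm0, mul_comm]
          exact hj
        have hnorm : ‖(⇑A)^[j / m + l] x‖ ≤ τ ^ (j / m + l) := hN _ (by omega)
        have hstep1 : s ^ j * ‖MLaux.sq A m k ((⇑A)^[l] x) j‖
            ≤ (s ^ m * τ) ^ (j / m) * (s ^ k * τ ^ l) := by
          rw [hcj]
          calc s ^ j * ‖(⇑A)^[j / m + l] x‖ ≤ s ^ j * τ ^ (j / m + l) :=
              mul_le_mul_of_nonneg_left hnorm (by positivity)
            _ = (s ^ m * τ) ^ (j / m) * (s ^ k * τ ^ l) := by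
              have ej : s ^ j = (s ^ m) ^ (j / m) * s ^ k := by
                rw [← pow_mul, ← pow_add, e]
              rw [ej, mul_pow, pow_add]
              ring
        refine hstep1.trans ?_
        have hexp : (s ^ m * τ) ^ (j / m) ≤ (s ^ m * τ)⁻¹ * q ^ j := by
          have hcast : ((j : ℝ))/(m : ℝ) - 1 ≤ ((j / m : ℕ) : ℝ) := by
            have h6 : j ≤ m * (j / m) + m :=
              le_of_eq_of_le e.symm (Nat.add_le_add_left hk.le (m * (j / m)))
            have hjm : (j : ℝ) ≤ ((j / m : ℕ) : ℝ) * (m : ℝ) + (m : ℝ) := by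
              calc (j : ℝ) ≤ ((m * (j / m) + m : ℕ) : ℝ) := by exact_mod_cast h6
                _ = ((j / m : ℕ) : ℝ) * (m : ℝ) + (m : ℝ) := by push_cast; ring
            have hm' : (0 : ℝ) < (m : ℝ) := by exact_mod_cast hm0
            rw [sub_le_iff_le_add, div_le_iff₀ hm']
            nlinarith [hjm]
          calc (s ^ m * τ) ^ (j / m) = (s ^ m * τ) ^ (((j / m : ℕ) : ℝ)) := by
                rw [Real.rpow_natCast]
            _ ≤ (s ^ m * τ) ^ ((j : ℝ)/(m : ℝ) - 1) :=
                Real.rpow_le_rpow_of_exponent_ge hr0 (le_of_lt hr1) hcast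
            _ = (s ^ m * τ)⁻¹ * q ^ j := by
                rw [Real.rpow_sub hr0, Real.rpow_one, hq,
                  show (j : ℝ)/(m : ℝ) = ((1 : ℝ)/(m : ℝ)) * (j : ℕ) by push_cast; ring,
                  Real.rpow_mul (le_of_lt hr0), Real.rpow_natCast]
                field_simp
        calc (s ^ m * τ) ^ (j / m) * (s ^ k * τ ^ l)
            ≤ ((s ^ m * τ)⁻¹ * q ^ j) * (s ^ k * τ ^ l) :=
              mul_le_mul_of_nonneg_right hexp (by positivity)
          _ = M * q ^ j := by
              rw [hM]
              ring
      · rw [MLaux.sq, if_neg hmod, norm_zero, mul_zero]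
        positivity
    · have := (tendsto_pow_atTop_nhds_zero_of_lt_one hq0 hq1).const_mul M
      simpa using this
  have hgood : ∀ k, k < m → ∀ l : ℕ,
      HasFPowerSeriesOnBall (MLaux.Gf (MLaux.sq A m k ((⇑A)^[l] x)))
        (MLaux.Ps K (MLaux.sq A m k ((⇑A)^[l] x))) 0 R := by
    intro k hk l
    have h0 := (MLaux.Ps K (MLaux.sq A m k ((⇑A)^[l] x))).hasFPowerSeriesOnBall
      (lt_of_lt_of_le hRpos (hrad k hk l))
    rw [← MLaux.Gf_eq_sum] at h0
    exact h0.mono hRpos (hrad k hk l)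
  have hD1 : ∀ k, k < m → ∀ l : ℕ, ∀ z ∈ Metric.eball (0 : K) R,
      deriv (MLaux.Gf (MLaux.sq A m k ((⇑A)^[l] x))) z
        = MLaux.Gf (fun j => MLaux.sq A m k ((⇑A)^[l] x) (j+1)) z := by
    intro k hk l z hz
    set c := MLaux.sq A m k ((⇑A)^[l] x) with hc
    have hg := hgood k hk l
    have hfd := hg.fderiv
    have h1 := hfd.hasSum hz
    rw [zero_add] at h1
    have h2 := (ContinuousLinearMap.apply K B (1 : K)).hasSum h1
    simp only [ContinuousLinearMap.apply_apply] at h2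
    have hterm1 : ∀ n : ℕ, (MLaux.Ps K c).derivSeries n (fun _ => z) 1
        = ((n.factorial : K))⁻¹ • z ^ n • c (n + 1) := by
      intro n
      have e1 : (fun _ : Fin n => z) = fun i : Fin n => z • (fun _ : Fin n => (1 : K)) i := by
        funext i
        simp
      rw [e1, ContinuousMultilinearMap.map_smul_univ]
      simp only [Finset.prod_const, Finset.card_univ, Fintype.card_fin,
        ContinuousLinearMap.smul_apply]
      rw [FormalMultilinearSeries.derivSeries_apply_diag]
      have e2 : MLaux.Ps K c (n + 1) (fun _ => (1 : K)) = (((n+1).factorial : K))⁻¹ • c (n + 1) := by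
        rw [MLaux.Ps_apply]
        simp
      rw [e2, ← Nat.cast_smul_eq_nsmul K (n + 1), smul_smul]
      have e3 : ((n + 1 : ℕ) : K) * (((n+1).factorial : K))⁻¹ = ((n.factorial : K))⁻¹ := by
        rw [Nat.factorial_succ, Nat.cast_mul, mul_inv, ← mul_assoc,
          mul_inv_cancel₀ (Nat.cast_ne_zero.mpr (Nat.succ_ne_zero n)), one_mul]
      rw [smul_smul, mul_assoc, e3, mul_comm, ← smul_smul]
    have e4 : (fun n : ℕ => (MLaux.Ps K c).derivSeries n (fun _ => z) 1)
        = fun n : ℕ => ((n.factorial : K))⁻¹ • z ^ n • c (n + 1) := funext hterm1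
    rw [e4] at h2
    rw [← fderiv_apply_one_eq_deriv]
    have h5 : MLaux.Gf (fun j => c (j + 1)) z = ∑' n : ℕ, ((n.factorial : K))⁻¹ • z ^ n • c (n + 1) := rfl
    rw [h5, h2.tsum_eq]
  have hinj : ∀ k : ℕ, Function.Injective (fun n : ℕ => m * n + k) := by
    intro k a b hab
    simp only at hab
    exact Nat.eq_of_mul_eq_mul_left hm0 (by omega)
  have hsupp : ∀ k, k < m → ∀ (v : B) (z : K),
      Function.support (fun j : ℕ => ((j.factorial : K))⁻¹ • z ^ j • MLaux.sq A m k v j)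
        ⊆ Set.range (fun n : ℕ => m * n + k) := by
    intro k hk v z j hj
    have hne : MLaux.sq A m k v j ≠ 0 := by
      intro h0
      apply hj
      simp [h0]
    rw [MLaux.sq] at hne
    by_cases hmod : j % m = k
    · refine ⟨j / m, ?_⟩
      have e := Nat.div_add_mod j m
      rw [hmod] at e
      simpa using e
    · exact absurd (if_neg hmod) hne
  have hterm : ∀ k, k < m → ∀ (v : B) (z : K) (n : ℕ),
      ((fun j : ℕ => ((j.factorial : K))⁻¹ • z ^ j • MLaux.sq A m k v j) ((fun n : ℕ => m * n + k) n))
        = ((m * n + k).factorial : K)⁻¹ • z ^ (m * n + k) • (⇑A)^[n] v := by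
    intro k hk v z n
    simp only
    rw [MLaux.sq, Nat.mul_add_mod, Nat.mod_eq_of_lt hk, if_pos rfl,
      Nat.mul_add_div hm0, Nat.div_eq_of_lt hk, Nat.add_zero]
  have hFG : ∀ k, k < m → ∀ v : B, F k v = MLaux.Gf (MLaux.sq A m k v) := by
    intro k hk v
    funext z
    rw [hF, MLaux.Gf]
    rw [← (hinj k).tsum_eq (hsupp k hk v z)]
    exact tsum_congr fun n => (hterm k hk v z n).symm
  have hiter : ∀ l : ℕ, ∀ k, k < m → ∀ i, i ≤ m → Set.EqOn
      (deriv^[i] (MLaux.Gf (MLaux.sq A m k ((⇑A)^[l] x))))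
      (MLaux.Gf (if i ≤ k then MLaux.sq A m (k - i) ((⇑A)^[l] x)
                 else MLaux.sq A m (k + m - i) ((⇑A)^[l+1] x)))
      (Metric.eball (0 : K) R) := by
    intro l k hk i
    induction i with
    | zero =>
      intro _ z hz
      simp only [Function.iterate_zero, id_eq, if_pos (Nat.zero_le k), Nat.sub_zero]
    | succ i ih =>
      intro hi z hz
      have prev := ih (by omega)
      rw [Function.iterate_succ_apply']
      by_cases hik1 : i + 1 ≤ k
      · rw [if_pos (by omega : i ≤ k)] at prev
        rw [if_pos hik1]
        have hd := Filter.EventuallyEq.deriv_eq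
          (Filter.eventuallyEq_of_mem (Metric.isOpen_eball.mem_nhds hz) prev)
        rw [hd, hD1 (k - i) (by omega) l z hz]
        congr 1
        funext j
        have e : k - i = (k - (i + 1)) + 1 := by omega
        rw [e, MLaux.sq_shift_succ A (by omega) _ j]
      · by_cases hik : i ≤ k
        · have hik' : i = k := by omega
          subst hik'
          rw [if_pos le_rfl, Nat.sub_self] at prev
          rw [if_neg hik1]
          have hd := Filter.EventuallyEq.deriv_eq
            (Filter.eventuallyEq_of_mem (Metric.isOpen_eball.mem_nhds hz) prev)
          rw [hd, hD1 0 hm0 l z hz]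
          congr 1
          funext j
          rw [MLaux.sq_shift_zero A hm0 _ j, ← Function.iterate_succ_apply' (⇑A) l x]
          have e : i + m - (i + 1) = m - 1 := by omega
          rw [e]
        · rw [if_neg hik] at prev
          rw [if_neg (by omega)]
          have hd := Filter.EventuallyEq.deriv_eq
            (Filter.eventuallyEq_of_mem (Metric.isOpen_eball.mem_nhds hz) prev)
          rw [hd, hD1 (k + m - i) (by omega) (l + 1) z hz]
          congr 1
          funext j
          have e : k + m - i = (k + m - (i + 1)) + 1 := by omega
          rw [e, MLaux.sq_shift_succ A (by omega) _ j]
  have hhs : ∀ k, k < m → ∀ l : ℕ, ∀ z ∈ Metric.eball (0 : K) R,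
      HasSum (fun n : ℕ => ((m*n+k).factorial : K)⁻¹ • z^(m*n+k) • (⇑A)^[n] ((⇑A)^[l] x))
        (MLaux.Gf (MLaux.sq A m k ((⇑A)^[l] x)) z) := by
    intro k hk l z hz
    have h1 := (hgood k hk l).hasSum hz
    rw [zero_add] at h1
    have h2 : (fun j : ℕ => MLaux.Ps K (MLaux.sq A m k ((⇑A)^[l] x)) j fun _ => z)
        = fun j : ℕ => ((j.factorial : K))⁻¹ • z ^ j • MLaux.sq A m k ((⇑A)^[l] x) j := by
      funext j
      exact MLaux.Ps_apply _ _ _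
    rw [h2] at h1
    have h3 := ((hinj k).hasSum_iff (fun j hj => ?_)).mpr h1
    · have h4 : ((fun j : ℕ => ((j.factorial : K))⁻¹ • z ^ j • MLaux.sq A m k ((⇑A)^[l] x) j)
          ∘ (fun n : ℕ => m * n + k))
          = fun n : ℕ => ((m * n + k).factorial : K)⁻¹ • z ^ (m * n + k) • (⇑A)^[n] ((⇑A)^[l] x) := by
        funext n
        exact hterm k hk _ z n
      rwa [h4] at h3
    · by_contra hne
      exact hj (hsupp k hk _ z hne)
  have hAF : ∀ k, k < m → ∀ z ∈ Metric.eball (0 : K) R, A (F k x z) = F k (A x) z := by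
    intro k hk z hz
    have h1 := hhs k hk 0 z hz
    have h2 := hhs k hk 1 z hz
    simp only [Function.iterate_zero_apply] at h1
    have e1 : (⇑A)^[1] x = A x := rfl
    rw [e1] at h2
    set S : ℕ → B := fun N =>
      ∑ n ∈ Finset.range N, ((m*n+k).factorial : K)⁻¹ • z^(m*n+k) • (⇑A)^[n] x with hS
    have hTx : Tendsto S atTop (𝓝 (MLaux.Gf (MLaux.sq A m k x) z)) := h1.tendsto_sum_nat
    have hAS : ∀ N, A (S N) = ∑ n ∈ Finset.range N,
        ((m*n+k).factorial : K)⁻¹ • z^(m*n+k) • (⇑A)^[n] (A x) := by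
      intro N
      rw [hS, map_sum]
      refine Finset.sum_congr rfl fun n _ => ?_
      rw [map_smul, map_smul, ← Function.iterate_succ_apply' (⇑A) n x,
        Function.iterate_succ_apply (⇑A) n x]
    have hTAx : Tendsto (fun N => A (S N)) atTop (𝓝 (MLaux.Gf (MLaux.sq A m k (A x)) z)) :=
      (h2.tendsto_sum_nat).congr fun N => (hAS N).symm
    have hmem : ∀ N, (S N, A (S N)) ∈ {q : B × B | q.1 ∈ D ∧ A q.1 = q.2} := by
      intro N
      refine ⟨?_, rfl⟩
      show S N ∈ D
      rw [hS]
      exact Submodule.sum_mem _ fun n _ =>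
        Submodule.smul_mem _ _ (Submodule.smul_mem _ _ (hxdom n))
    have hlim : Tendsto (fun N => (S N, A (S N))) atTop
        (𝓝 (MLaux.Gf (MLaux.sq A m k x) z, MLaux.Gf (MLaux.sq A m k (A x)) z)) :=
      hTx.prodMk_nhds hTAx
    have hmem2 := hA.mem_of_tendsto hlim (Eventually.of_forall hmem)
    rw [hFG k hk x, hFG k hk (A x)]
    exact hmem2.2
  refine ⟨?_, ?_⟩
  · intro k hk
    constructor
    · intro z hz
      have hzb := hball z hz
      have h1 := hiter 0 k hk m le_rfl hzb
      rw [if_neg (by omega)] at h1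
      rw [hFG k hk x, iteratedDeriv_eq_iterate]
      have h2 : (⇑A)^[0] x = x := rfl
      rw [h2] at h1
      rw [h1]
      have h3 : MLaux.sq A m (k + m - m) ((⇑A)^[0+1] x) = MLaux.sq A m k (A x) := by
        norm_num
      rw [h3, ← hFG k hk (A x), show Gf (MLaux.sq A m k x) = F k x from (hFG k hk x).symm]
      exact (hAF k hk z hzb).symm
    · intro i hi
      have hzb : (0 : K) ∈ Metric.eball (0 : K) R := Metric.mem_eball_self hRpos
      have h1 := hiter 0 k hk i (le_of_lt (lt_of_lt_of_le hi le_rfl)) hzb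
      rw [hFG k hk x, iteratedDeriv_eq_iterate]
      have h2 : (⇑A)^[0] x = x := rfl
      rw [h2] at h1
      rw [h1]
      by_cases hik : i ≤ k
      · rw [if_pos hik, MLaux.Gf_zero, MLaux.sq]
        simp only [Nat.zero_mod, Nat.zero_div, Function.iterate_zero_apply]
        rcases eq_or_ne i k with rfl | hne
        · rw [if_pos (by omega), if_pos rfl]
        · rw [if_neg (by omega), if_neg hne]
      · rw [if_neg hik, MLaux.Gf_zero, MLaux.sq]
        rw [Nat.zero_mod]
        rw [if_neg (by omega), if_neg (by omega)]
  · intro l z hz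
    have hzb := hball z hz
    have hcycle : ∀ l' : ℕ, Set.EqOn (deriv^[m*l'] (MLaux.Gf (MLaux.sq A m 0 x)))
        (MLaux.Gf (MLaux.sq A m 0 ((⇑A)^[l'] x))) (Metric.eball (0 : K) R) := by
      intro l'
      induction l' with
      | zero =>
        simp only [Nat.mul_zero, Function.iterate_zero, Function.iterate_zero_apply]
        exact fun w hw => rfl
      | succ l' ih =>
        intro w hw
        have e : m * (l' + 1) = m + m * l' := by ring
        rw [e, Function.iterate_add_apply]
        rw [MLaux.eqOn_deriv_iter Metric.isOpen_eball ih m hw]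
        have h2 := hiter l' 0 hm0 m le_rfl hw
        rw [if_neg (by omega)] at h2
        rw [h2]
        norm_num
    rw [hFG 0 hm0 x, iteratedDeriv_eq_iterate, hcycle l hzb, ← hFG 0 hm0 ((⇑A)^[l] x)]
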